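/- Under the decentralized-memory setup with Huber smoothing, define p(x) = (a/3)∑_{j=1}^{d−1} |⟨e_{j+1} − e_j, x⟩| − (a/3)⟨e_1, x⟩ + c·h_δ(x) with δ = a/(3cd), and let x* = (a/(3cd))·1_d. Then for every i ∈ {1,…,n}, every τ with 0 ≤ τ < τ_com·n(d−1)/6, and every x ∈ mem_i(τ), one has p(x) − p(x*) ≥ a²/(18cd). -/

import Mathlib

open scoped BigOperators RealInnerProductSpace Classical

noncomputable section

/-- The `k`-th standard basis vector of `ℝ^d`, `0`-indexed (so the paper's `e_k` is
`stdBasis d (k-1)`); out-of-range indices give `0`. -/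
def stdBasis (d j : ℕ) : EuclideanSpace ℝ (Fin d) :=
  if h : j < d then EuclideanSpace.single ⟨j, h⟩ 1 else 0

/-- Scalar Huber function. -/
def huber1 (δ t : ℝ) : ℝ := if |t| ≤ δ then t ^ 2 / 2 else δ * |t| - δ ^ 2 / 2

/-- Huber function on `ℝ^d`: `h_δ(x) = ∑_{j=1}^d h_δ^j(⟨e_j, x⟩)`. -/
def huber (d : ℕ) (δ : ℝ) (x : EuclideanSpace ℝ (Fin d)) : ℝ :=
  ∑ j ∈ Finset.range d, huber1 δ ⟪stdBasis d j, x⟫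

/-- The subgradient oracle `∇̂h_j` (paper's `1`-indexed `j`, so `e_{j+1} = stdBasis d j`
and `e_j = stdBasis d (j-1)`). -/
def gradh (d j : ℕ) (x : EuclideanSpace ℝ (Fin d)) : EuclideanSpace ℝ (Fin d) :=
  if ⟪stdBasis d (j - 1), x⟫ < ⟪stdBasis d j, x⟫ then stdBasis d j - stdBasis d (j - 1)
  else if ⟪stdBasis d j, x⟫ < ⟪stdBasis d (j - 1), x⟫ then stdBasis d (j - 1) - stdBasis d j
  else 0

/-- The subgradient oracle `∇̂f_i` in the Huber-smoothed setting
(nodes `i` are `1`-indexed, `i ∈ {1,…,n}`); `gradient (huber d δ)` is `∇h_δ`. -/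
def oracleH (d n : ℕ) (a δ : ℝ) (i : ℕ) (x : EuclideanSpace ℝ (Fin d)) :
    EuclideanSpace ℝ (Fin d) :=
  gradient (huber d δ) x +
    (if i ≤ n / 3 then
      a • (∑ j ∈ Finset.Icc 1 ((d - 1) / 2), gradh d (2 * j - 1) x) - a • stdBasis d 0
    else if i ≤ 2 * n / 3 then
      a • ∑ j ∈ Finset.Icc 1 ((d - 1) / 2), gradh d (2 * j) x
    else 0)

/-- The time-varying center node `i_c(τ) = 2n/3 + 1 + (⌊τ/τ_com⌋ mod (n/3))`. -/
def center (n : ℕ) (τcom τ : ℝ) : ℕ := 2 * n / 3 + 1 + (⌊τ / τcom⌋₊ % (n / 3))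

/-- The set of `j` such that `(j, i) ∈ E(τ)` for the star graph with center `i_c(τ)`. -/
def inEdges (n : ℕ) (τcom τ : ℝ) (i : ℕ) : Set ℕ :=
  {j | 1 ≤ j ∧ j ≤ n ∧
    ((j = center n τcom τ ∧ i ≠ center n τcom τ) ∨
     (i = center n τcom τ ∧ j ≠ center n τcom τ))}

/-- `memloc_i(τ)`: memory obtainable by a local subgradient computation. -/
def memloc (d : ℕ) (τsub : ℝ)
    (gfun : ℕ → EuclideanSpace ℝ (Fin d) → EuclideanSpace ℝ (Fin d))
    (mem : ℕ → ℝ → Set (EuclideanSpace ℝ (Fin d))) (i : ℕ) (τ : ℝ) :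
    Set (EuclideanSpace ℝ (Fin d)) :=
  if τsub ≤ τ then
    ↑(Submodule.span ℝ (mem i (τ - τsub) ∪ (gfun i '' mem i (τ - τsub))))
  else ∅

/-- `memcom_i(τ)`: memory obtainable by decentralized communication. -/
def memcom (d n : ℕ) (τcom : ℝ)
    (mem : ℕ → ℝ → Set (EuclideanSpace ℝ (Fin d))) (i : ℕ) (τ : ℝ) :
    Set (EuclideanSpace ℝ (Fin d)) :=
  if τcom ≤ τ then
    ↑(Submodule.span ℝ (⋃ j ∈ inEdges n τcom τ i, mem j (τ - τcom)))
  else ∅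

namespace S11


def cl1s (k : ℕ) : ℕ := if k = 0 then 2 else if k % 2 = 1 then k + 1 else k
def cl2s (k : ℕ) : ℕ := if k % 2 = 0 ∧ k ≠ 0 then k + 1 else k
def beta (p w : ℕ) : ℕ := if w ≤ p then 0 else w / (p + 1) + 1
def Mb (p w : ℕ) : ℕ := max (beta p w + 1) 2
def qq (p r w : ℕ) : ℕ := if r ≤ w then w - (w - r) % p else 0
def mu (p r w : ℕ) : ℕ := max (beta p w) (if 1 ≤ qq p r w then Mb p (qq p r w - 1) else 0)
/-- level bound for node `i` at window `w`, with `p = n/3`. -/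
def lam (p i w : ℕ) : ℕ :=
  if i ≤ p then cl1s (beta p w) else if i ≤ 2 * p then cl2s (beta p w)
  else mu p (i - (2 * p + 1)) w

lemma cl1s_le (k : ℕ) : cl1s k ≤ max (k + 1) 2 := by
  unfold cl1s; split_ifs <;> simp [le_max_iff] <;> omega
lemma le_cl1s (k : ℕ) : k ≤ cl1s k := by unfold cl1s; split_ifs <;> omega
lemma one_le_cl1s (k : ℕ) : 1 ≤ cl1s k := by unfold cl1s; split_ifs <;> omega
lemma cl1s_idem (k : ℕ) : cl1s (cl1s k) = cl1s k := by
  unfold cl1s; split_ifs <;> first | omega | exact (‹False›).elim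

lemma cl2s_le (k : ℕ) : cl2s k ≤ k + 1 := by unfold cl2s; split_ifs <;> omega
lemma le_cl2s (k : ℕ) : k ≤ cl2s k := by unfold cl2s; split_ifs <;> omega
lemma cl2s_idem (k : ℕ) : cl2s (cl2s k) = cl2s k := by
  unfold cl2s; split_ifs <;> first | omega | exact (‹False›).elim

lemma beta_mono (p : ℕ) {w w' : ℕ} (h : w ≤ w') : beta p w ≤ beta p w' := by
  unfold beta
  split_ifs <;>
    first
      | omega
      | exact Nat.zero_le _
      | exact Nat.add_le_add_right (Nat.div_le_div_right h) 1

lemma Mb_mono (p : ℕ) {w w' : ℕ} (h : w ≤ w') : Mb p w ≤ Mb p w' :=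
  max_le_max (Nat.add_le_add_right (beta_mono p h) 1) le_rfl

lemma qq_le (p r w : ℕ) : qq p r w ≤ w := by unfold qq; split_ifs <;> omega

lemma qq_mono (p r : ℕ) {w w' : ℕ} (h : w ≤ w') : qq p r w ≤ qq p r w' := by
  unfold qq
  split_ifs with h1 h2
  · have e1 : w - (w - r) % p = r + p * ((w - r) / p) := by
      have := Nat.div_add_mod (w - r) p; omega
    have e2 : w' - (w' - r) % p = r + p * ((w' - r) / p) := by
      have := Nat.div_add_mod (w' - r) p; omega
    rw [e1, e2]
    exact Nat.add_le_add_left (Nat.mul_le_mul_left _ (Nat.div_le_div_right (by omega))) r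
  · omega
  · exact Nat.zero_le _
  · omega

lemma mu_mono (p r : ℕ) {w w' : ℕ} (h : w ≤ w') : mu p r w ≤ mu p r w' := by
  unfold mu
  apply max_le_max (beta_mono p h)
  split_ifs with h1 h2
  · exact Mb_mono p (by have := qq_mono p r h; omega)
  · exact absurd (le_trans h1 (qq_mono p r h)) h2
  · exact Nat.zero_le _
  · exact Nat.zero_le _

lemma beta_le_mu (p r w : ℕ) : beta p w ≤ mu p r w := le_max_left _ _

lemma mu_le_Mb (p r w : ℕ) : mu p r w ≤ Mb p w := by
  unfold mu
  apply max_le (by unfold Mb; exact le_trans (Nat.le_succ _) (le_max_left _ _))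
  split_ifs with h1
  · exact Mb_mono p (by have := qq_le p r w; omega)
  · exact Nat.zero_le _

lemma lam_mono (p i : ℕ) {w w' : ℕ} (h : w ≤ w') : lam p i w ≤ lam p i w' := by
  unfold lam; split_ifs
  · unfold cl1s; have := beta_mono p h; split_ifs <;> omega
  · unfold cl2s; have := beta_mono p h; split_ifs <;> omega
  · exact mu_mono p _ h

lemma beta_le_lam (p i w : ℕ) : beta p w ≤ lam p i w := by
  unfold lam; split_ifs
  · exact le_cl1s _
  · exact le_cl2s _
  · exact beta_le_mu _ _ _

lemma lam_le_Mb (p i w : ℕ) : lam p i w ≤ Mb p w := by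
  unfold lam; split_ifs
  · exact cl1s_le _
  · exact le_trans (cl2s_le _) (le_max_left _ _)
  · exact mu_le_Mb _ _ _

lemma beta_step (p w : ℕ) (hp : 1 ≤ p) (hw : p + 1 ≤ w) : Mb p (w - p - 1) ≤ beta p w := by
  have hbw : beta p w = w / (p + 1) + 1 := by unfold beta; rw [if_neg (by omega)]
  have h1 : 1 ≤ w / (p + 1) := (Nat.one_le_div_iff (by omega)).2 hw
  rw [hbw]
  unfold Mb
  apply max_le _ (by omega)
  by_cases hv : w - p - 1 ≤ p
  · have : beta p (w - p - 1) = 0 := by unfold beta; rw [if_pos hv]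
    omega
  · have hb : beta p (w - p - 1) = (w - p - 1) / (p + 1) + 1 := by
      unfold beta; rw [if_neg hv]
    have e : (w - p - 1) + (p + 1) = w := by omega
    have h2 : ((w - p - 1) + (p + 1)) / (p + 1) = (w - p - 1) / (p + 1) + 1 :=
      Nat.add_div_right _ (by omega)
    rw [e] at h2
    omega

/-- broadcast: what the current center knew last window is `≤ beta p w`. -/
lemma broadcast (p w : ℕ) (hp : 1 ≤ p) (hw : 1 ≤ w) :
    mu p (w % p) (w - 1) ≤ beta p w := by
  unfold mu
  apply max_le (beta_mono p (by omega))
  set r := w % p with hr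
  split_ifs with h1
  · have hrw : r ≤ w - 1 := by
      unfold qq at h1; by_contra hc; rw [if_neg hc] at h1; omega
    have hrlt : r < w := by omega
    obtain ⟨k, hk2⟩ : ∃ k, w / p = k := ⟨_, rfl⟩
    have hw3 : w = p * k + r := by
      rw [← hk2, hr]; exact (Nat.div_add_mod w p).symm
    have hk1 : 1 ≤ k := by
      rcases Nat.eq_zero_or_pos k with h | h
      · subst h; simp at hw3; omega
      · exact h
    have h5 : p * k = p * (k - 1) + p := by
      conv_lhs => rw [show k = (k - 1) + 1 by omega]
      ring
    have hw2 : w - 1 - r = p - 1 + p * (k - 1) := by omega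
    have hmod : (w - 1 - r) % p = p - 1 := by
      rw [hw2, Nat.add_mul_mod_self_left, Nat.mod_eq_of_lt (by omega)]
    have hple : p ≤ w := by
      have h6 : p * 1 ≤ p * k := Nat.mul_le_mul_left p hk1
      rw [Nat.mul_one] at h6; omega
    have hqq : qq p r (w - 1) = w - p := by
      unfold qq; rw [if_pos hrw, hmod]; omega
    rw [hqq] at h1 ⊢
    exact beta_step p w hp (by omega)
  · exact Nat.zero_le _

/-- collect: current center's level dominates everyone's previous level. -/
lemma collect (p w : ℕ) (hw : 1 ≤ w) : Mb p (w - 1) ≤ mu p (w % p) w := by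
  have hq : qq p (w % p) w = w := by
    unfold qq
    rw [if_pos (Nat.mod_le w p)]
    have h : w - w % p = p * (w / p) := by have := Nat.div_add_mod w p; omega
    rw [h, Nat.mul_mod_right]
    omega
  unfold mu
  rw [hq, if_pos hw]
  exact le_max_right _ _

lemma Mb_final (p k w : ℕ) (hp : 1 ≤ p) (hk : 1 ≤ k) (hw : w < p * k) :
    Mb p w ≤ k + 1 := by
  unfold Mb
  apply max_le _ (by omega)
  unfold beta
  split_ifs with h
  · omega
  · have : w / (p + 1) < k := (Nat.div_lt_iff_lt_mul (by omega)).2 (by nlinarith)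
    omega


def clamp (δ t : ℝ) : ℝ := max (-δ) (min δ t)

lemma clamp_zero {δ : ℝ} (hδ : 0 ≤ δ) : clamp δ 0 = 0 := by
  unfold clamp
  rw [min_eq_right hδ, max_eq_right (by linarith)]

lemma huber1_nonneg {δ : ℝ} (hδ : 0 ≤ δ) (t : ℝ) : 0 ≤ huber1 δ t := by
  unfold huber1; split_ifs with h
  · positivity
  · push_neg at h; nlinarith [abs_nonneg t]

set_option maxHeartbeats 1600000 in
lemma key_ineq {δ : ℝ} (hδ : 0 ≤ δ) (t s : ℝ) :
    |huber1 δ s - huber1 δ t - (s - t) * clamp δ t| ≤ (s - t) ^ 2 / 2 := by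
  have hsa := abs_nonneg s
  have hss := sq_abs s
  rcases lt_or_ge t (-δ) with h1 | h1
  · -- t < -δ
    have ht : huber1 δ t = δ * (-t) - δ ^ 2 / 2 := by
      unfold huber1
      rw [abs_of_neg (by linarith), if_neg (by push_neg; linarith)]
    have hcl : clamp δ t = -δ := by
      unfold clamp
      rw [min_eq_right (by linarith), max_eq_left (by linarith)]
    rw [ht, hcl, abs_le]
    unfold huber1
    split_ifs with habs
    · have := abs_le.1 habs
      constructor <;> nlinarith
    · push_neg at habs
      rcases abs_cases s with ⟨he, hsgn⟩ | ⟨he, hsgn⟩ <;> rw [he] at habs ⊢ <;>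
        constructor <;> nlinarith [sq_nonneg (δ - s), sq_nonneg (δ + s), sq_nonneg (s - t)]
  · rcases le_or_gt t δ with h2 | h2
    · -- -δ ≤ t ≤ δ
      have habs_t : |t| ≤ δ := abs_le.2 ⟨h1, h2⟩
      have ht : huber1 δ t = t ^ 2 / 2 := by unfold huber1; rw [if_pos habs_t]
      have hcl : clamp δ t = t := by
        unfold clamp
        rw [min_eq_right h2, max_eq_right h1]
      rw [ht, hcl, abs_le]
      unfold huber1
      split_ifs with habs
      · constructor <;> nlinarith
      · push_neg at habs
        rcases abs_cases s with ⟨he, hsgn⟩ | ⟨he, hsgn⟩ <;> rw [he] at habs ⊢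
        · constructor
          · nlinarith [mul_nonneg (show (0:ℝ) ≤ δ - t by linarith)
              (show (0:ℝ) ≤ s - (δ + t) / 2 by linarith), sq_nonneg (s - t)]
          · nlinarith [sq_nonneg (s - δ)]
        · constructor
          · nlinarith [mul_nonneg (show (0:ℝ) ≤ δ + t by linarith)
              (show (0:ℝ) ≤ -s - (δ - t) / 2 by linarith), sq_nonneg (s - t)]
          · nlinarith [sq_nonneg (s + δ)]
    · -- δ < t
      have ht : huber1 δ t = δ * t - δ ^ 2 / 2 := by
        unfold huber1
        rw [abs_of_pos (by linarith : (0:ℝ) < t), if_neg (not_le.2 h2)]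
      have hcl : clamp δ t = δ := by
        unfold clamp
        rw [min_eq_left (by linarith), max_eq_right (by linarith)]
      rw [ht, hcl, abs_le]
      unfold huber1
      split_ifs with habs
      · have h3 := abs_le.1 habs
        constructor
        · nlinarith [sq_nonneg (s - δ), sq_nonneg (s - t)]
        · nlinarith [mul_nonneg (show (0:ℝ) ≤ t - δ by linarith)
            (show (0:ℝ) ≤ t + δ - 2 * s by linarith)]
      · push_neg at habs
        rcases abs_cases s with ⟨he, hsgn⟩ | ⟨he, hsgn⟩ <;> rw [he] at habs ⊢
        · constructor <;> nlinarith [sq_nonneg (s - t)]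
        · constructor
          · nlinarith [mul_nonneg (show (0:ℝ) ≤ -s - δ by linarith)
              (show (0:ℝ) ≤ t - δ by linarith), mul_nonneg
              (show (0:ℝ) ≤ -s - δ by linarith) (show (0:ℝ) ≤ δ by linarith)]
          · nlinarith [sq_nonneg (δ + s), sq_nonneg (s - t), mul_nonneg
              (show (0:ℝ) ≤ -s - δ by linarith) (show (0:ℝ) ≤ t - δ by linarith)]

lemma hasDerivAt_huber1 {δ : ℝ} (hδ : 0 ≤ δ) (t : ℝ) :
    HasDerivAt (huber1 δ) (clamp δ t) t := by
  rw [hasDerivAt_iff_isLittleO, Asymptotics.isLittleO_iff]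
  intro c hc
  filter_upwards [Metric.ball_mem_nhds t (show (0:ℝ) < 2 * c by linarith)] with s hs
  have h1 := key_ineq hδ t s
  have h2 : |s - t| < 2 * c := by
    rw [Metric.mem_ball, Real.dist_eq] at hs; exact hs
  rw [Real.norm_eq_abs, Real.norm_eq_abs, smul_eq_mul]
  have h3 : |huber1 δ s - huber1 δ t - (s - t) * clamp δ t| ≤ (s - t) ^ 2 / 2 := h1
  refine le_trans h3 ?_
  nlinarith [abs_nonneg (s - t), sq_abs (s - t), le_abs_self (s - t), neg_abs_le (s - t)]


lemma inner_stdBasis_lt {d : ℕ} (x : EuclideanSpace ℝ (Fin d)) {j : ℕ} (h : j < d) :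
    ⟪stdBasis d j, x⟫ = x ⟨j, h⟩ := by
  unfold stdBasis
  rw [dif_pos h, EuclideanSpace.inner_single_left]
  simp

lemma inner_stdBasis_ge {d : ℕ} (x : EuclideanSpace ℝ (Fin d)) {j : ℕ} (h : d ≤ j) :
    ⟪stdBasis d j, x⟫ = 0 := by
  unfold stdBasis
  rw [dif_neg (by omega), inner_zero_left]

lemma huber_eq {d : ℕ} (δ : ℝ) (x : EuclideanSpace ℝ (Fin d)) :
    huber d δ x = ∑ m : Fin d, huber1 δ (x m) := by
  unfold huber
  rw [← Fin.sum_univ_eq_sum_range (fun j => huber1 δ ⟪stdBasis d j, x⟫) d]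
  refine Finset.sum_congr rfl fun m _ => ?_
  rw [inner_stdBasis_lt x m.isLt]

def clampVec (d : ℕ) (δ : ℝ) (x : EuclideanSpace ℝ (Fin d)) : EuclideanSpace ℝ (Fin d) :=
  (WithLp.equiv 2 (Fin d → ℝ)).symm fun m => clamp δ (x m)

lemma clampVec_apply {d : ℕ} (δ : ℝ) (x : EuclideanSpace ℝ (Fin d)) (m : Fin d) :
    clampVec d δ x m = clamp δ (x m) := rfl

lemma hasGradientAt_huber {d : ℕ} {δ : ℝ} (hδ : 0 ≤ δ) (x : EuclideanSpace ℝ (Fin d)) :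
    HasGradientAt (huber d δ) (clampVec d δ x) x := by
  rw [hasGradientAt_iff_hasFDerivAt]
  have hterm : ∀ m : Fin d, HasFDerivAt (fun y : EuclideanSpace ℝ (Fin d) => huber1 δ (y m))
      (clamp δ (x m) • (EuclideanSpace.proj m : EuclideanSpace ℝ (Fin d) →L[ℝ] ℝ)) x :=
    fun m => by
      have := (hasDerivAt_huber1 hδ (x m)).comp_hasFDerivAt x
        (EuclideanSpace.proj (𝕜 := ℝ) (ι := Fin d) m).hasFDerivAt
      exact this
  have hsum : HasFDerivAt (fun y : EuclideanSpace ℝ (Fin d) => ∑ m : Fin d, huber1 δ (y m))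
      (∑ m : Fin d, clamp δ (x m) • (EuclideanSpace.proj m : EuclideanSpace ℝ (Fin d) →L[ℝ] ℝ))
      x := HasFDerivAt.fun_sum fun m _ => hterm m
  have hfun : (huber d δ) = fun y : EuclideanSpace ℝ (Fin d) => ∑ m : Fin d, huber1 δ (y m) :=
    funext fun y => huber_eq δ y
  rw [hfun]
  refine hsum.congr_fderiv ?_
  apply ContinuousLinearMap.ext
  intro v
  simp only [InnerProductSpace.toDual_apply_apply, ContinuousLinearMap.sum_apply,
    ContinuousLinearMap.coe_smul', Pi.smul_apply, smul_eq_mul,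
    PiLp.inner_apply, RCLike.inner_apply, conj_trivial]
  exact Finset.sum_congr rfl fun m _ => mul_comm _ _

lemma gradient_huber {d : ℕ} {δ : ℝ} (hδ : 0 ≤ δ) (x : EuclideanSpace ℝ (Fin d)) :
    gradient (huber d δ) x = clampVec d δ x :=
  (hasGradientAt_huber hδ x).gradient


def Kk (d k : ℕ) : Submodule ℝ (EuclideanSpace ℝ (Fin d)) where
  carrier := {x | ∀ m : Fin d, k ≤ (m : ℕ) → x m = 0}
  add_mem' := fun hx hy m hm => by
    have h1 := hx m hm
    have h2 := hy m hm
    show _ + _ = (0:ℝ)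
    exact (congrArg₂ (· + ·) h1 h2).trans (add_zero 0)
  zero_mem' := fun m hm => rfl
  smul_mem' := fun c x hx m hm => by
    show _ = (0:ℝ)
    rw [show (c • x) m = c * x m from rfl, hx m hm, mul_zero]

lemma mem_Kk {d k : ℕ} {x : EuclideanSpace ℝ (Fin d)} :
    x ∈ Kk d k ↔ ∀ m : Fin d, k ≤ (m : ℕ) → x m = 0 := Iff.rfl

lemma Kk_mono {d : ℕ} {k k' : ℕ} (h : k ≤ k') : Kk d k ≤ Kk d k' :=
  fun _ hx m hm => hx m (by omega)

lemma stdBasis_mem {d j k : ℕ} (h : j < k) : stdBasis d j ∈ Kk d k := by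
  unfold stdBasis; split_ifs with hd
  · intro m hm
    rw [EuclideanSpace.single_apply, if_neg]
    intro e
    rw [e] at hm
    simp at hm
    omega
  · exact (Kk d k).zero_mem

lemma inner_stdBasis_zero {d k j : ℕ} {x : EuclideanSpace ℝ (Fin d)}
    (hx : x ∈ Kk d k) (h : k ≤ j) : ⟪stdBasis d j, x⟫ = 0 := by
  rcases lt_or_ge j d with hd | hd
  · rw [inner_stdBasis_lt x hd]; exact hx _ h
  · exact inner_stdBasis_ge x hd

lemma clampVec_mem {d k : ℕ} {δ : ℝ} (hδ : 0 ≤ δ) {x : EuclideanSpace ℝ (Fin d)}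
    (hx : x ∈ Kk d k) : clampVec d δ x ∈ Kk d k :=
  fun m hm => by rw [clampVec_apply, hx m hm, clamp_zero hδ]

lemma gradh_mem (d m : ℕ) (x : EuclideanSpace ℝ (Fin d)) : gradh d m x ∈ Kk d (m + 1) := by
  unfold gradh; split_ifs
  · exact Submodule.sub_mem _ (stdBasis_mem (by omega)) (stdBasis_mem (by omega))
  · exact Submodule.sub_mem _ (stdBasis_mem (by omega)) (stdBasis_mem (by omega))
  · exact Submodule.zero_mem _

lemma gradh_eq_zero {d k m : ℕ} {x : EuclideanSpace ℝ (Fin d)}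
    (hx : x ∈ Kk d k) (h : k < m) : gradh d m x = 0 := by
  unfold gradh
  rw [inner_stdBasis_zero hx (by omega : k ≤ m - 1), inner_stdBasis_zero hx (by omega : k ≤ m)]
  simp

lemma oracle_mem {d n : ℕ} {a δ : ℝ} (hδ : 0 ≤ δ) {k i : ℕ} {x : EuclideanSpace ℝ (Fin d)}
    (hx : x ∈ Kk d k) :
    oracleH d n a δ i x ∈
      Kk d (if i ≤ n / 3 then cl1s k else if i ≤ 2 * n / 3 then cl2s k else k) := by
  unfold oracleH
  have hgrad : gradient (huber d δ) x ∈ Kk d k := by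
    rw [gradient_huber hδ]; exact clampVec_mem hδ hx
  split_ifs with h1 h2
  · refine Submodule.add_mem _ (Kk_mono (le_cl1s k) hgrad) (Submodule.sub_mem _ ?_ ?_)
    · refine Submodule.smul_mem _ _ (Submodule.sum_mem _ fun j hj => ?_)
      simp only [Finset.mem_Icc] at hj
      by_cases hcmp : 2 * j - 1 ≤ k
      · refine Kk_mono ?_ (gradh_mem d (2 * j - 1) x)
        rcases Nat.even_or_odd k with ⟨m, hm⟩ | ⟨m, hm⟩ <;> unfold cl1s <;> split_ifs <;> omega
      · rw [gradh_eq_zero hx (by omega)]; exact Submodule.zero_mem _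
    · exact Submodule.smul_mem _ _ (Kk_mono (one_le_cl1s k) (stdBasis_mem (by omega)))
  · refine Submodule.add_mem _ (Kk_mono (le_cl2s k) hgrad) ?_
    refine Submodule.smul_mem _ _ (Submodule.sum_mem _ fun j hj => ?_)
    simp only [Finset.mem_Icc] at hj
    by_cases hcmp : 2 * j ≤ k
    · refine Kk_mono ?_ (gradh_mem d (2 * j) x)
      rcases Nat.even_or_odd k with ⟨m, hm⟩ | ⟨m, hm⟩ <;> unfold cl2s <;> split_ifs <;> omega
    · rw [gradh_eq_zero hx (by omega)]; exact Submodule.zero_mem _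
  · rw [add_zero (gradient (huber d δ) x)]; exact hgrad


lemma clN_lam (p i w : ℕ) :
    (if i ≤ p then cl1s (lam p i w) else if i ≤ 2 * p then cl2s (lam p i w) else lam p i w)
      ≤ lam p i w := by
  unfold lam
  split_ifs
  · exact le_of_eq (cl1s_idem _)
  · exact le_of_eq (cl2s_idem _)
  · exact le_rfl

lemma invariant (d p : ℕ) (hp1 : 1 ≤ p) (a δ τcom τsub : ℝ) (hδ : 0 ≤ δ)
    (hcom : 0 < τcom) (hsub : 0 < τsub)
    (mem : ℕ → ℝ → Set (EuclideanSpace ℝ (Fin d)))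
    (hmem0 : ∀ i, mem i 0 = {0})
    (hmem : ∀ i τ, 0 ≤ τ → mem i τ ⊆
      {0} ∪ memloc d τsub (oracleH d (3 * p) a δ) mem i τ ∪ memcom d (3 * p) τcom mem i τ) :
    ∀ N : ℕ, ∀ τ : ℝ, 0 ≤ τ → τ ≤ N * min τsub τcom →
      ∀ i, mem i τ ⊆ (Kk d (lam p i ⌊τ / τcom⌋₊) : Set (EuclideanSpace ℝ (Fin d))) := by
  intro N
  induction N with
  | zero =>
    intro τ h0 hN i
    have hτ0 : τ = 0 := le_antisymm (by simpa using hN) h0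
    subst hτ0
    rw [hmem0]
    intro x hx
    rw [Set.mem_singleton_iff] at hx
    subst hx
    exact (Kk d _).zero_mem
  | succ N ih =>
    intro τ h0 hN i x hx
    rcases hmem i τ h0 hx with (h | h) | h
    · rw [Set.mem_singleton_iff] at h; subst h; exact (Kk d _).zero_mem
    · -- memloc
      unfold memloc at h
      split_ifs at h with hts
      · have h0' : 0 ≤ τ - τsub := by linarith
        have hN' : τ - τsub ≤ N * min τsub τcom := by
          have hm1 : min τsub τcom ≤ τsub := min_le_left _ _
          push_cast at hN ⊢
          linarith
        have hw : ⌊(τ - τsub) / τcom⌋₊ ≤ ⌊τ / τcom⌋₊ :=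
          Nat.floor_le_floor ((div_le_div_iff_of_pos_right hcom).2 (by linarith))
        have hsub1 : mem i (τ - τsub) ⊆ (Kk d (lam p i ⌊τ / τcom⌋₊) : Set _) :=
          fun y hy => Kk_mono (lam_mono p i hw) (ih (τ - τsub) h0' hN' i hy)
        have hsub2 : oracleH d (3 * p) a δ i '' mem i (τ - τsub) ⊆
            (Kk d (lam p i ⌊τ / τcom⌋₊) : Set _) := by
          rintro y ⟨z, hz, rfl⟩
          have hz' : z ∈ Kk d (lam p i ⌊τ / τcom⌋₊) := hsub1 hz
          refine Kk_mono ?_ (oracle_mem hδ hz')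
          have e1 : 3 * p / 3 = p := by omega
          have e2 : 2 * (3 * p) / 3 = 2 * p := by omega
          rw [e1, e2]
          exact clN_lam p i _
        exact Submodule.span_le.2 (Set.union_subset hsub1 hsub2) h
      · exact absurd h (Set.notMem_empty x)
    · -- memcom
      unfold memcom at h
      split_ifs at h with hct
      · have hw1 : 1 ≤ ⌊τ / τcom⌋₊ := by
          refine Nat.le_floor ?_
          rw [Nat.cast_one, le_div_iff₀ hcom]
          linarith
        have hτc0 : 0 ≤ τ - τcom := by linarith
        have hwprev : ⌊(τ - τcom) / τcom⌋₊ = ⌊τ / τcom⌋₊ - 1 := by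
          have e : (τ - τcom) / τcom = τ / τcom - 1 := by field_simp
          rw [e, Nat.floor_sub_one]
        have hN' : τ - τcom ≤ N * min τsub τcom := by
          have hm1 : min τsub τcom ≤ τcom := min_le_right _ _
          push_cast at hN ⊢
          linarith
        refine Submodule.span_le.2 ?_ h
        refine Set.iUnion₂_subset fun j hj => ?_
        obtain ⟨hj1, hjn, hcase⟩ := hj
        intro y hy
        have hyk : y ∈ Kk d (lam p j (⌊τ / τcom⌋₊ - 1)) := by
          have := ih (τ - τcom) hτc0 hN' j hy
          rwa [hwprev] at this
        have hcen : center (3 * p) τcom τ = 2 * p + 1 + (⌊τ / τcom⌋₊ % p) := by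
          unfold center
          have e2 : 2 * (3 * p) / 3 = 2 * p := by omega
          have e1 : 3 * p / 3 = p := by omega
          rw [e2, e1]
        rcases hcase with ⟨hjc, hic⟩ | ⟨hic, hjc⟩
        · -- j is the center
          have hlamj : lam p j (⌊τ / τcom⌋₊ - 1) = mu p (⌊τ / τcom⌋₊ % p) (⌊τ / τcom⌋₊ - 1) := by
            rw [hjc, hcen]
            unfold lam
            rw [if_neg (by omega), if_neg (by omega)]
            congr 1
            omega
          refine Kk_mono ?_ hyk
          rw [hlamj]
          exact le_trans (broadcast p _ hp1 hw1) (beta_le_lam p i _)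
        · -- i is the center
          have hlami : lam p i ⌊τ / τcom⌋₊ = mu p (⌊τ / τcom⌋₊ % p) ⌊τ / τcom⌋₊ := by
            rw [hic, hcen]
            unfold lam
            rw [if_neg (by omega), if_neg (by omega)]
            congr 1
            omega
          refine Kk_mono ?_ hyk
          rw [hlami]
          exact le_trans (lam_le_Mb p j _) (collect p _ hw1)
      · exact absurd h (Set.notMem_empty x)

lemma p_lower {d : ℕ} (hd : 3 ≤ d) {a c δ : ℝ} (ha : 0 < a) (hc : 0 < c) (hδ : 0 ≤ δ)
    {x : EuclideanSpace ℝ (Fin d)} (hx : x ∈ Kk d (d - 1)) :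
    0 ≤ (a / 3) * ∑ j ∈ Finset.Icc 1 (d - 1), |⟪stdBasis d j - stdBasis d (j - 1), x⟫|
        - (a / 3) * ⟪stdBasis d 0, x⟫ + c * huber d δ x := by
  have hhub : 0 ≤ huber d δ x := by
    rw [huber_eq]; exact Finset.sum_nonneg fun m _ => huber1_nonneg hδ _
  have htel : ∑ j ∈ Finset.Icc 1 (d - 1), (⟪stdBasis d j, x⟫ - ⟪stdBasis d (j - 1), x⟫)
      = ⟪stdBasis d (d - 1), x⟫ - ⟪stdBasis d 0, x⟫ := by
    rw [show Finset.Icc 1 (d - 1) = Finset.Ico 1 (d - 1 + 1) from by rw [Finset.Ico_add_one_right_eq_Icc],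
      Finset.sum_Ico_eq_sum_range]
    rw [show d - 1 + 1 - 1 = d - 1 by omega]
    refine Eq.trans (Finset.sum_congr rfl fun i _ => ?_)
      (Finset.sum_range_sub (fun i => ⟪stdBasis d i, x⟫) (d - 1))
    rw [show 1 + i - 1 = i by omega, show 1 + i = i + 1 by omega]
  have hlast : ⟪stdBasis d (d - 1), x⟫ = 0 := inner_stdBasis_zero hx le_rfl
  have hrwsum : ∑ j ∈ Finset.Icc 1 (d - 1), |⟪stdBasis d j - stdBasis d (j - 1), x⟫|
      = ∑ j ∈ Finset.Icc 1 (d - 1), |⟪stdBasis d j, x⟫ - ⟪stdBasis d (j - 1), x⟫| :=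
    Finset.sum_congr rfl fun j _ => by rw [inner_sub_left]
  have habs : |⟪stdBasis d 0, x⟫| ≤
      ∑ j ∈ Finset.Icc 1 (d - 1), |⟪stdBasis d j, x⟫ - ⟪stdBasis d (j - 1), x⟫| := by
    calc |⟪stdBasis d 0, x⟫|
        = |∑ j ∈ Finset.Icc 1 (d - 1), (⟪stdBasis d j, x⟫ - ⟪stdBasis d (j - 1), x⟫)| := by
          rw [htel, hlast, zero_sub, abs_neg]
      _ ≤ _ := Finset.abs_sum_le_sum_abs _ _
  rw [hrwsum]
  have h1 : ⟪stdBasis d 0, x⟫ ≤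
      ∑ j ∈ Finset.Icc 1 (d - 1), |⟪stdBasis d j, x⟫ - ⟪stdBasis d (j - 1), x⟫| :=
    le_trans (le_abs_self _) habs
  have h2 := mul_le_mul_of_nonneg_left h1 (by linarith : (0:ℝ) ≤ a / 3)
  have h3 := mul_nonneg hc.le hhub
  linarith

end S11

theorem stmt11 (d n : ℕ) (hd : 3 ≤ d) (hodd : d % 2 = 1) (hn : 3 ≤ n) (hn3 : 3 ∣ n)
    (a c τcom τsub : ℝ) (ha : 0 < a) (hc : 0 < c) (hcom : 0 < τcom) (hsub : 0 < τsub)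
    (δ : ℝ) (hδ : δ = a / (3 * c * d))
    (mem : ℕ → ℝ → Set (EuclideanSpace ℝ (Fin d)))
    (hmem0 : ∀ i, mem i 0 = {0})
    (hmem : ∀ i τ, 0 ≤ τ →
      mem i τ ⊆ {0} ∪ memloc d τsub (oracleH d n a δ) mem i τ ∪ memcom d n τcom mem i τ)
    (p : EuclideanSpace ℝ (Fin d) → ℝ)
    (hp : ∀ x, p x =
      (a / 3) * ∑ j ∈ Finset.Icc 1 (d - 1), |⟪stdBasis d j - stdBasis d (j - 1), x⟫|
        - (a / 3) * ⟪stdBasis d 0, x⟫ + c * huber d δ x)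
    (xstar : EuclideanSpace ℝ (Fin d))
    (hxstar : xstar = (WithLp.equiv 2 (Fin d → ℝ)).symm fun _ => a / (3 * c * d)) :
    ∀ i, 1 ≤ i → i ≤ n → ∀ τ : ℝ, 0 ≤ τ → τ < τcom * (n * (d - 1) : ℕ) / 6 →
      ∀ x ∈ mem i τ, a ^ 2 / (18 * c * d) ≤ p x - p xstar := by
  obtain ⟨q, rfl⟩ := hn3
  intro i hi1 hin τ h0 hT x hx
  have hp1 : 1 ≤ q := by omega
  have hdR : (0:ℝ) < (d : ℝ) := by
    have : 0 < d := by omega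
    exact_mod_cast this
  have hδ0 : 0 < δ := by rw [hδ]; positivity
  have hmin : 0 < min τsub τcom := lt_min hsub hcom
  -- apply the invariant
  have hτN : τ ≤ (⌈τ / min τsub τcom⌉₊ : ℝ) * min τsub τcom := by
    have h1 := Nat.le_ceil (τ / min τsub τcom)
    calc τ = (τ / min τsub τcom) * min τsub τcom := by field_simp
      _ ≤ (⌈τ / min τsub τcom⌉₊ : ℝ) * min τsub τcom :=
        mul_le_mul_of_nonneg_right h1 hmin.le
  have hinv := S11.invariant d q hp1 a δ τcom τsub hδ0.le hcom hsub mem hmem0 hmem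
    (⌈τ / min τsub τcom⌉₊) τ h0 hτN i hx
  -- the window count is small
  set k := (d - 1) / 2 with hk
  have hdk : d - 1 = 2 * k := by omega
  have hwlt : ⌊τ / τcom⌋₊ < q * k := by
    refine (Nat.floor_lt (by positivity)).2 ?_
    have hcast : ((3 * q * (d - 1) : ℕ) : ℝ) = 6 * ((q * k : ℕ) : ℝ) := by
      rw [hdk]; push_cast; ring
    rw [hcast] at hT
    rw [div_lt_iff₀ hcom]
    nlinarith [hT]
  have hlam : S11.lam q i ⌊τ / τcom⌋₊ ≤ d - 1 := by
    refine le_trans (S11.lam_le_Mb q i _) (le_trans (S11.Mb_final q k _ hp1 (by omega) hwlt) ?_)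
    omega
  have hxK : x ∈ S11.Kk d (d - 1) := S11.Kk_mono hlam hinv
  -- value of `p` at `xstar`
  have hxs : ∀ m : Fin d, xstar m = δ := by
    intro m
    rw [hxstar, hδ]
    rfl
  have hsx : ∀ j, j < d → ⟪stdBasis d j, xstar⟫ = δ := fun j hj => by
    rw [S11.inner_stdBasis_lt xstar hj, hxs]
  have hsum0 : ∑ j ∈ Finset.Icc 1 (d - 1), |⟪stdBasis d j - stdBasis d (j - 1), xstar⟫| = 0 := by
    refine Finset.sum_eq_zero fun j hj => ?_
    rw [Finset.mem_Icc] at hj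
    rw [inner_sub_left, hsx j (by omega), hsx (j - 1) (by omega), sub_self, abs_zero]
  have hhubxs : huber d δ xstar = d * (δ ^ 2 / 2) := by
    rw [S11.huber_eq]
    have h1 : ∀ m : Fin d, huber1 δ (xstar m) = δ ^ 2 / 2 := fun m => by
      rw [hxs]
      unfold huber1
      rw [if_pos (le_of_eq (abs_of_nonneg hδ0.le))]
    rw [Finset.sum_congr rfl fun m _ => h1 m, Finset.sum_const, Finset.card_univ,
      Fintype.card_fin, nsmul_eq_mul]
  have hpxstar : p xstar = -(a ^ 2 / (18 * c * d)) := by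
    rw [hp xstar, hsum0, hsx 0 (by omega), hhubxs, hδ]
    have hdne : (d:ℝ) ≠ 0 := ne_of_gt hdR
    field_simp
    ring
  have hpx : 0 ≤ p x := by
    rw [hp x]
    exact S11.p_lower hd ha hc hδ0.le hxK
  rw [hpxstar]
  have : 0 < a ^ 2 / (18 * c * d) := by positivity
  linarith


end
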